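/- arXiv:2002.09679 — 3 statements merged into one kernel-verified Lean document; each statement's English description precedes it below -/
import Mathlib

section
/- Let n ≥ 1, s ∈ (0,1), r > 0, let Ω ⊆ ℝⁿ be an open set with B_r ⊆ Ω, and let u ∈ ℋ^s(Ω). Assume (the known fractional mean value property on compactly contained balls) that u(0) = ∫_{𝒞B_ρ} u(y) dμ_ρ(y) for every ρ > 0 such that the closed ball of radius ρ centered at 0 is contained in Ω. Then also u(0) = ∫_{𝒞B_r} u(y) dμ_r(y), i.e. u(0) = c(n,s) r^{2s} ∫_{𝒞B_r} u(y)/((|y|² − r²)^s |y|ⁿ) dy. -/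
open MeasureTheory Metric Filter Set Topology

noncomputable section

/-- Euclidean space ℝⁿ. -/
abbrev En (n : ℕ) := EuclideanSpace ℝ (Fin n)

/-- The principal-value fractional Laplacian `(-Δ)^s u` vanishes at the point `x`:
`lim_{ε→0⁺} ∫_{|y|>ε} (u(x)-u(x-y))/|y|^{n+2s} dy = 0`. -/
def FracLapVanishesAt (n : ℕ) (s : ℝ) (u : En n → ℝ) (x : En n) : Prop :=
  Tendsto (fun ε : ℝ =>
      ∫ y in {y : En n | ε < ‖y‖}, (u x - u (x - y)) / ‖y‖ ^ ((n : ℝ) + 2 * s))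
    (𝓝[>] (0 : ℝ)) (𝓝 0)

/-- `u ∈ ℋ^s(Ω)`: continuous on ℝⁿ, with `∫ |u(y)|/(1+|y|^{n+2s}) dy < ∞`, and
`(-Δ)^s u = 0` in `Ω`. -/
def MemHs (n : ℕ) (s : ℝ) (Ω : Set (En n)) (u : En n → ℝ) : Prop :=
  Continuous u ∧
    Integrable (fun y : En n => |u y| / (1 + ‖y‖ ^ ((n : ℝ) + 2 * s))) ∧
    ∀ x ∈ Ω, FracLapVanishesAt n s u x

/-- The density of the measure `μ_r` (with normalizing constant `c = c(n,s)`):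
`c r^{2s} / ((|y|² - r²)^s |y|ⁿ)`. -/
def muDen (n : ℕ) (s c r : ℝ) (y : En n) : ℝ :=
  c * r ^ (2 * s) / ((‖y‖ ^ 2 - r ^ 2) ^ s * ‖y‖ ^ (n : ℝ))

/-- `∫_A u dμ_r`. -/
def muInt (n : ℕ) (s c r : ℝ) (A : Set (En n)) (u : En n → ℝ) : ℝ :=
  ∫ y in A, u y * muDen n s c r y

/-- `μ_r(A)`. -/
def muMeas (n : ℕ) (s c r : ℝ) (A : Set (En n)) : ℝ :=
  ∫ y in A, muDen n s c r y

lemma muDen_measurable (n : ℕ) (s c r : ℝ) : Measurable (muDen n s c r) := by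
  unfold muDen
  apply Measurable.div measurable_const
  exact ((((measurable_norm.pow_const 2).sub measurable_const).pow measurable_const)).mul
    (measurable_norm.pow measurable_const)

lemma muDen_nonneg (n : ℕ) {s c r : ℝ} (hc : 0 ≤ c) (hr : 0 ≤ r) {y : En n}
    (hy : r ≤ ‖y‖) : 0 ≤ muDen n s c r y := by
  apply div_nonneg (mul_nonneg hc (Real.rpow_nonneg hr _))
  exact mul_nonneg (Real.rpow_nonneg (by nlinarith) _) (Real.rpow_nonneg (norm_nonneg _) _)

lemma muDen_mono (n : ℕ) {s c : ℝ} (hc : 0 ≤ c) (hs0 : 0 ≤ s) {ρ r : ℝ}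
    (hρ : 0 ≤ ρ) (hρr : ρ ≤ r) {y : En n} (hy : r < ‖y‖) :
    muDen n s c ρ y ≤ muDen n s c r y := by
  unfold muDen
  have hyr : (0:ℝ) < ‖y‖ ^ 2 - r ^ 2 := by nlinarith [hρ.trans hρr]
  apply div_le_div₀
  · exact mul_nonneg hc (Real.rpow_nonneg (hρ.trans hρr) _)
  · exact mul_le_mul_of_nonneg_left
      (Real.rpow_le_rpow hρ hρr (by positivity)) hc
  · exact mul_pos (Real.rpow_pos_of_pos hyr _)
      (Real.rpow_pos_of_pos (lt_of_le_of_lt (hρ.trans hρr) hy) _)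
  · apply mul_le_mul_of_nonneg_right _ (Real.rpow_nonneg (norm_nonneg _) _)
    exact Real.rpow_le_rpow hyr.le (by nlinarith) hs0

lemma rpow_two_mul {t : ℝ} (ht : 0 ≤ t) (s : ℝ) : t ^ (2 * s) = (t ^ 2) ^ s := by
  rw [← Real.rpow_natCast t 2, ← Real.rpow_mul ht]
  norm_num

lemma muDen_tail (n : ℕ) {s c r : ℝ} (hc : 0 ≤ c) (hs0 : 0 < s) (hr : 0 < r) {y : En n}
    (hy : max (2 * r) 1 ≤ ‖y‖) :
    muDen n s c r y ≤
      (2 * (c * r ^ (2 * s)) * (((3 / 4 : ℝ)) ^ s)⁻¹) / (1 + ‖y‖ ^ ((n : ℝ) + 2 * s)) := by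
  set t := ‖y‖ with ht
  have ht1 : (1:ℝ) ≤ t := le_trans (le_max_right _ _) hy
  have ht2r : 2 * r ≤ t := le_trans (le_max_left _ _) hy
  have ht0 : (0:ℝ) < t := lt_of_lt_of_le one_pos ht1
  have h1 : (3/4 : ℝ) * t ^ 2 ≤ t ^ 2 - r ^ 2 := by nlinarith
  have hT1 : (1:ℝ) ≤ t ^ ((n:ℝ) + 2 * s) := by
    calc (1:ℝ) = t ^ (0:ℝ) := (Real.rpow_zero t).symm
    _ ≤ t ^ ((n:ℝ) + 2 * s) := Real.rpow_le_rpow_of_exponent_le ht1 (by positivity)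
  have hA : (0:ℝ) ≤ c * r ^ (2 * s) := mul_nonneg hc (Real.rpow_nonneg hr.le _)
  have hden : (3/4 : ℝ) ^ s * t ^ ((n:ℝ) + 2 * s) ≤ (t ^ 2 - r ^ 2) ^ s * t ^ (n:ℝ) := by
    have e1 : t ^ ((n:ℝ) + 2 * s) = t ^ (n:ℝ) * t ^ (2 * s) := Real.rpow_add ht0 _ _
    have e2 : (3/4 : ℝ) ^ s * t ^ (2 * s) = ((3/4) * t ^ 2) ^ s := by
      rw [rpow_two_mul ht0.le, ← Real.mul_rpow (by norm_num) (by positivity)]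
    calc (3/4 : ℝ) ^ s * t ^ ((n:ℝ) + 2 * s)
        = ((3/4) ^ s * t ^ (2 * s)) * t ^ (n:ℝ) := by rw [e1]; ring
      _ = ((3/4) * t ^ 2) ^ s * t ^ (n:ℝ) := by rw [e2]
      _ ≤ (t ^ 2 - r ^ 2) ^ s * t ^ (n:ℝ) :=
          mul_le_mul_of_nonneg_right (Real.rpow_le_rpow (by positivity) h1 hs0.le)
            (Real.rpow_nonneg ht0.le _)
  have step1 : muDen n s c r y ≤ (c * r ^ (2 * s)) / ((3/4 : ℝ) ^ s * t ^ ((n:ℝ) + 2 * s)) := by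
    unfold muDen
    exact div_le_div_of_nonneg_left hA (by positivity) hden
  refine step1.trans ?_
  rw [div_le_div_iff₀ (by positivity) (by positivity)]
  have hkey : (2 * (c * r ^ (2 * s)) * (((3/4 : ℝ)) ^ s)⁻¹) * ((3/4 : ℝ) ^ s * t ^ ((n:ℝ) + 2 * s))
      = 2 * (c * r ^ (2 * s)) * t ^ ((n:ℝ) + 2 * s) := by
    have h34 : ((3/4 : ℝ) ^ s) ≠ 0 := by positivity
    field_simp
  rw [hkey]
  nlinarith [hA, hT1]

lemma alg_cancel (P : ℝ) {Q : ℝ} (hQ : Q ≠ 0) (cc B N : ℝ) :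
    cc * P / (B * N) = cc * Q⁻¹ * ((P⁻¹ * B) * (Q⁻¹ * N))⁻¹ := by
  have h : ((P⁻¹ * B) * (Q⁻¹ * N))⁻¹ = P * B⁻¹ * (Q * N⁻¹) := by
    rw [mul_inv, mul_inv, mul_inv, inv_inv, inv_inv]
  rw [h, div_eq_mul_inv, mul_inv]
  calc cc * P * (B⁻¹ * N⁻¹) = (Q⁻¹ * Q) * (cc * P * (B⁻¹ * N⁻¹)) := by
        rw [inv_mul_cancel₀ hQ, one_mul]
    _ = cc * Q⁻¹ * (P * B⁻¹ * (Q * N⁻¹)) := by ring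

lemma mem_compl_ball_iff {n : ℕ} {ρ : ℝ} {y : En n} :
    y ∈ (ball (0 : En n) ρ)ᶜ ↔ ρ ≤ ‖y‖ := by
  simp [mem_ball, dist_zero_right]

lemma normalization (n : ℕ) {s c : ℝ} (hc : 0 < c)
    (hnorm : c * ∫ y in (ball (0 : En n) 1)ᶜ, ((‖y‖ ^ 2 - 1) ^ s * ‖y‖ ^ (n : ℝ))⁻¹ = 1)
    {ρ : ℝ} (hρ : 0 < ρ) :
    IntegrableOn (muDen n s c ρ) (ball (0 : En n) ρ)ᶜ ∧
      ∫ y in (ball (0 : En n) ρ)ᶜ, muDen n s c ρ y = 1 := by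
  set f : En n → ℝ := fun z => ((‖z‖ ^ 2 - 1) ^ s * ‖z‖ ^ (n : ℝ))⁻¹ with hf
  -- f is integrable on the complement of the unit ball
  have hint : IntegrableOn f (ball (0 : En n) 1)ᶜ := by
    by_contra h
    rw [integral_undef h] at hnorm
    simp at hnorm
  set g : En n → ℝ := Set.indicator (ball (0 : En n) 1)ᶜ f with hg
  have hgint : Integrable g :=
    (integrable_indicator_iff measurableSet_ball.compl).2 hint
  have hρn : ((ρ : ℝ) ^ n) ≠ 0 := pow_ne_zero _ hρ.ne'
  -- pointwise identity
  have hpt : ∀ y : En n, Set.indicator (ball (0 : En n) ρ)ᶜ (muDen n s c ρ) y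
      = (c * ((ρ : ℝ) ^ n)⁻¹) * g (ρ⁻¹ • y) := by
    intro y
    have hnorm_smul : ‖ρ⁻¹ • y‖ = ρ⁻¹ * ‖y‖ := by
      rw [norm_smul, Real.norm_eq_abs, abs_of_pos (inv_pos.2 hρ)]
    have hmem : (ρ⁻¹ • y ∈ (ball (0 : En n) 1)ᶜ) ↔ (y ∈ (ball (0 : En n) ρ)ᶜ) := by
      rw [mem_compl_ball_iff, mem_compl_ball_iff, hnorm_smul, le_inv_mul_iff₀ hρ, mul_one]
    by_cases hy : y ∈ (ball (0 : En n) ρ)ᶜ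
    · rw [Set.indicator_of_mem hy, hg, Set.indicator_of_mem (hmem.2 hy), hf]
      show muDen n s c ρ y
        = c * ((ρ:ℝ) ^ n)⁻¹ * ((‖ρ⁻¹ • y‖ ^ 2 - 1) ^ s * ‖ρ⁻¹ • y‖ ^ (n : ℝ))⁻¹
      have hyρ : ρ ≤ ‖y‖ := mem_compl_ball_iff.1 hy
      have hA : (0:ℝ) ≤ ‖y‖ ^ 2 - ρ ^ 2 := by nlinarith
      have e1 : ‖ρ⁻¹ • y‖ ^ 2 - 1 = (ρ⁻¹) ^ 2 * (‖y‖ ^ 2 - ρ ^ 2) := by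
        rw [hnorm_smul]; field_simp
      have e2 : (‖ρ⁻¹ • y‖ ^ 2 - 1) ^ s = ((ρ ^ (2 * s) : ℝ))⁻¹ * (‖y‖ ^ 2 - ρ ^ 2) ^ s := by
        rw [e1, Real.mul_rpow (by positivity) hA, inv_pow, Real.inv_rpow (by positivity),
          ← rpow_two_mul hρ.le]
      have e3 : ‖ρ⁻¹ • y‖ ^ (n : ℝ) = ((ρ:ℝ) ^ n)⁻¹ * ‖y‖ ^ (n : ℝ) := by
        rw [hnorm_smul, Real.mul_rpow (by positivity) (norm_nonneg y),
          Real.inv_rpow hρ.le, Real.rpow_natCast]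
      unfold muDen
      rw [e2, e3]
      exact alg_cancel _ hρn _ _ _
    · rw [Set.indicator_of_notMem hy, hg,
        Set.indicator_of_notMem (fun hmem' => hy (hmem.1 hmem')), mul_zero]
  have hcomp : Integrable (fun y : En n => g (ρ⁻¹ • y)) :=
    hgint.comp_smul (inv_ne_zero hρ.ne')
  have hind_int : Integrable (Set.indicator (ball (0 : En n) ρ)ᶜ (muDen n s c ρ)) := by
    rw [funext hpt]
    exact hcomp.const_mul _
  constructor
  · rwa [← integrable_indicator_iff measurableSet_ball.compl]
  · have : ∫ y in (ball (0 : En n) ρ)ᶜ, muDen n s c ρ y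
        = ∫ y, Set.indicator (ball (0 : En n) ρ)ᶜ (muDen n s c ρ) y :=
      (integral_indicator measurableSet_ball.compl).symm
    rw [this, funext hpt, integral_const_mul _ _,
      Measure.integral_comp_inv_smul_of_nonneg volume g hρ.le,
      finrank_euclideanSpace_fin, smul_eq_mul]
    have hgval : ∫ y, g y = ∫ y in (ball (0 : En n) 1)ᶜ, f y :=
      integral_indicator measurableSet_ball.compl
    rw [hgval]
    have hcanc : c * ((ρ:ℝ) ^ n)⁻¹ * ((ρ:ℝ) ^ n * ∫ y in (ball (0 : En n) 1)ᶜ, f y)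
        = c * ∫ y in (ball (0 : En n) 1)ᶜ, f y := by
      field_simp
    rw [hcanc]
    exact hnorm

lemma muDen_tendsto (n : ℕ) (s c : ℝ) {r : ℝ} (hr : 0 < r) {y : En n} (hy : r < ‖y‖) :
    Tendsto (fun ρ => muDen n s c ρ y) (𝓝[<] r) (𝓝 (muDen n s c r y)) := by
  have hy2 : (0:ℝ) < ‖y‖ ^ 2 - r ^ 2 := by nlinarith
  have hn0 : (0:ℝ) < ‖y‖ := lt_trans hr hy
  have h1 : ContinuousAt
      (fun ρ : ℝ => c * ρ ^ (2 * s) / ((‖y‖ ^ 2 - ρ ^ 2) ^ s * ‖y‖ ^ (n : ℝ))) r := by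
    apply ContinuousAt.div
    · exact continuousAt_const.mul (Real.continuousAt_rpow_const r (2 * s) (Or.inl hr.ne'))
    · apply ContinuousAt.mul _ continuousAt_const
      have hin : ContinuousAt (fun ρ : ℝ => ‖y‖ ^ 2 - ρ ^ 2) r :=
        continuousAt_const.sub (continuous_pow 2).continuousAt
      exact hin.rpow_const (Or.inl hy2.ne')
    · exact (mul_pos (Real.rpow_pos_of_pos hy2 s) (Real.rpow_pos_of_pos hn0 _)).ne'
  exact tendsto_nhdsWithin_of_tendsto_nhds h1

/-- Lemma A.1 of the paper: if `Ω` is open, `B_r ⊆ Ω`, `u ∈ ℋ^s(Ω)`,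
and the fractional mean value property holds on every ball whose closure is contained in
`Ω`, then it also holds on `B_r`. -/
theorem mean_value_on_ball_touching_boundary
    (n : ℕ) (hn : 1 ≤ n) (s : ℝ) (hs : s ∈ Ioo (0 : ℝ) 1)
    (c : ℝ) (hc : 0 < c)
    (hnorm : c * ∫ y in (ball (0 : En n) 1)ᶜ, ((‖y‖ ^ 2 - 1) ^ s * ‖y‖ ^ (n : ℝ))⁻¹ = 1)
    (r : ℝ) (hr : 0 < r)
    (Ω : Set (En n)) (hΩopen : IsOpen Ω) (hball : ball (0 : En n) r ⊆ Ω)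
    (u : En n → ℝ) (hu : MemHs n s Ω u)
    (hmvp : ∀ ρ : ℝ, 0 < ρ → closedBall (0 : En n) ρ ⊆ Ω →
      u 0 = muInt n s c ρ (ball (0 : En n) ρ)ᶜ u) :
    u 0 = muInt n s c r (ball (0 : En n) r)ᶜ u := by
  obtain ⟨hs0, hs1⟩ := hs
  set S : Set (En n) := (ball (0 : En n) r)ᶜ with hS
  have hSmeas : MeasurableSet S := measurableSet_ball.compl
  have hNorm : ∀ ρ : ℝ, 0 < ρ → IntegrableOn (muDen n s c ρ) (ball (0:En n) ρ)ᶜ ∧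
      ∫ y in (ball (0:En n) ρ)ᶜ, muDen n s c ρ y = 1 :=
    fun ρ hρ => normalization n hc hnorm hρ
  have hDr_int : IntegrableOn (muDen n s c r) S := (hNorm r hr).1
  have hDr_val : ∫ y in S, muDen n s c r y = 1 := (hNorm r hr).2
  -- a.e. on S we have r < ‖y‖
  have hsph : ∀ᵐ y ∂(volume.restrict S), r < ‖y‖ := by
    rw [ae_restrict_iff' hSmeas]
    have h0 : volume (sphere (0:En n) r) = 0 :=
      Measure.addHaar_sphere_of_ne_zero _ _ hr.ne'
    have h1 : ∀ᵐ y : En n ∂volume, y ∉ sphere (0:En n) r := by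
      rw [ae_iff]; simpa [Metric.sphere, dist_zero_right] using h0
    filter_upwards [h1] with y hy hyS
    have h2 : r ≤ ‖y‖ := mem_compl_ball_iff.1 hyS
    rcases lt_or_eq_of_le h2 with h | h
    · exact h
    · exact absurd (by simpa [mem_sphere_iff_norm] using h.symm) hy
  have hmeasu : ∀ ρ : ℝ, ∀ μ : Measure (En n),
      AEStronglyMeasurable (fun y => u y * muDen n s c ρ y) μ :=
    fun ρ μ => (hu.1.measurable.mul (muDen_measurable n s c ρ)).aestronglyMeasurable
  have hmeasau : ∀ ρ : ℝ, ∀ μ : Measure (En n),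
      AEStronglyMeasurable (fun y => |u y| * muDen n s c ρ y) μ :=
    fun ρ μ => (hu.1.measurable.abs.mul (muDen_measurable n s c ρ)).aestronglyMeasurable
  -- integrability of the dominating function |u| * D_r on S
  obtain ⟨M₀, hM₀⟩ := (isCompact_closedBall (0:En n) (max (2*r) 1)).exists_bound_of_continuousOn
    hu.1.continuousOn
  have habs_int : IntegrableOn (fun y => |u y| * muDen n s c r y) S := by
    have hsplit : S ⊆ (S ∩ closedBall (0:En n) (max (2*r) 1)) ∪ (ball (0:En n) (max (2*r) 1))ᶜ := by
      intro y hy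
      by_cases h : y ∈ closedBall (0:En n) (max (2*r) 1)
      · exact Or.inl ⟨hy, h⟩
      · refine Or.inr (mem_compl_ball_iff.2 ?_)
        simp only [mem_closedBall, dist_zero_right, not_le] at h
        exact h.le
    apply IntegrableOn.mono_set _ hsplit
    apply IntegrableOn.union
    · apply Integrable.mono' ((hDr_int.mono_set inter_subset_left).const_mul M₀)
        (hmeasau r _)
      rw [ae_restrict_iff' (hSmeas.inter measurableSet_closedBall)]
      refine ae_of_all _ fun y hy => ?_
      have h1 : r ≤ ‖y‖ := mem_compl_ball_iff.1 hy.1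
      have h2 : 0 ≤ muDen n s c r y := muDen_nonneg n hc.le hr.le h1
      rw [Real.norm_eq_abs, abs_mul, abs_abs, abs_of_nonneg h2]
      refine mul_le_mul_of_nonneg_right ?_ h2
      have := hM₀ y hy.2
      rwa [Real.norm_eq_abs] at this
    · set K := 2 * (c * r ^ (2*s)) * (((3/4:ℝ)) ^ s)⁻¹ with hK
      apply Integrable.mono' ((hu.2.1.integrableOn).const_mul K) (hmeasau r _)
      rw [ae_restrict_iff' measurableSet_ball.compl]
      refine ae_of_all _ fun y hy => ?_
      have h1 : max (2*r) 1 ≤ ‖y‖ := mem_compl_ball_iff.1 hy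
      have hr1 : r ≤ ‖y‖ := le_trans (le_trans (by linarith : r ≤ 2*r) (le_max_left _ _)) h1
      have h2 := muDen_tail n hc.le hs0 hr h1
      have h3 : 0 ≤ muDen n s c r y := muDen_nonneg n hc.le hr.le hr1
      rw [Real.norm_eq_abs, abs_mul, abs_abs, abs_of_nonneg h3]
      calc |u y| * muDen n s c r y ≤ |u y| * (K / (1 + ‖y‖ ^ ((n:ℝ)+2*s))) :=
            mul_le_mul_of_nonneg_left h2 (abs_nonneg _)
        _ = K * (|u y| / (1 + ‖y‖ ^ ((n:ℝ)+2*s))) := by ring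
  -- a.e. domination
  have hbound : ∀ ρ ∈ Ioo (0:ℝ) r, ∀ᵐ y ∂(volume.restrict S),
      ‖u y * muDen n s c ρ y‖ ≤ |u y| * muDen n s c r y := by
    intro ρ hρ
    filter_upwards [hsph] with y hy
    have h0 : ρ ≤ ‖y‖ := (hρ.2.trans hy).le
    rw [Real.norm_eq_abs, abs_mul]
    refine mul_le_mul_of_nonneg_left ?_ (abs_nonneg _)
    rw [abs_of_nonneg (muDen_nonneg n hc.le hρ.1.le h0)]
    exact muDen_mono n hc.le hs0.le hρ.1.le hρ.2.le hy
  have hu_int : ∀ ρ ∈ Ioo (0:ℝ) r, IntegrableOn (fun y => u y * muDen n s c ρ y) S :=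
    fun ρ hρ => habs_int.mono' (hmeasu ρ _) (hbound ρ hρ)
  have hu_int_r : IntegrableOn (fun y => u y * muDen n s c r y) S := by
    apply habs_int.mono' (hmeasu r _)
    rw [ae_restrict_iff' hSmeas]
    refine ae_of_all _ fun y hy => ?_
    have h1 : r ≤ ‖y‖ := mem_compl_ball_iff.1 hy
    rw [Real.norm_eq_abs, abs_mul, abs_of_nonneg (muDen_nonneg n hc.le hr.le h1)]
  have hev : ∀ᶠ ρ in 𝓝[<] r, ρ ∈ Ioo (0:ℝ) r := Ioo_mem_nhdsLT_of_mem ⟨hr, le_rfl⟩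
  -- dominated convergence for the main term
  have hΦ : Tendsto (fun ρ => ∫ y in S, u y * muDen n s c ρ y) (𝓝[<] r)
      (𝓝 (∫ y in S, u y * muDen n s c r y)) := by
    apply tendsto_integral_filter_of_dominated_convergence
      (fun y => |u y| * muDen n s c r y)
      (Eventually.of_forall fun ρ => hmeasu ρ _) ?_ habs_int ?_
    · filter_upwards [hev] with ρ hρ
      exact hbound ρ hρ
    · filter_upwards [hsph] with y hy
      exact Tendsto.const_mul (u y) (muDen_tendsto n s c hr hy)
  -- dominated convergence for the mass term
  have hΨ : Tendsto (fun ρ => ∫ y in S, muDen n s c ρ y) (𝓝[<] r) (𝓝 1) := by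
    rw [← hDr_val]
    apply tendsto_integral_filter_of_dominated_convergence (muDen n s c r)
      (Eventually.of_forall fun ρ => (muDen_measurable n s c ρ).aestronglyMeasurable)
      ?_ hDr_int ?_
    · filter_upwards [hev] with ρ hρ
      filter_upwards [hsph] with y hy
      have h0 : ρ ≤ ‖y‖ := (hρ.2.trans hy).le
      rw [Real.norm_eq_abs, abs_of_nonneg (muDen_nonneg n hc.le hρ.1.le h0)]
      exact muDen_mono n hc.le hs0.le hρ.1.le hρ.2.le hy
    · filter_upwards [hsph] with y hy
      exact muDen_tendsto n s c hr hy
  -- sup of |u| on the closed ball of radius r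
  obtain ⟨M, hM⟩ := (isCompact_closedBall (0:En n) r).exists_bound_of_continuousOn
    hu.1.continuousOn
  -- the key eventual estimate
  have hkey : ∀ᶠ ρ in 𝓝[<] r,
      |u 0 - ∫ y in S, u y * muDen n s c ρ y| ≤ M * (1 - ∫ y in S, muDen n s c ρ y) := by
    filter_upwards [hev] with ρ hρ
    obtain ⟨hρ0, hρr⟩ := hρ
    have hmv := hmvp ρ hρ0 ((closedBall_subset_ball hρr).trans hball)
    set A : Set (En n) := (ball (0:En n) ρ)ᶜ ∩ ball (0:En n) r with hA
    have hAmeas : MeasurableSet A := measurableSet_ball.compl.inter measurableSet_ball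
    have hdisj : Disjoint A S := disjoint_compl_right.mono_left inter_subset_right
    have hcup : (ball (0:En n) ρ)ᶜ = A ∪ S := by
      ext y
      simp only [hA, hS, mem_union, mem_inter_iff, mem_compl_iff, mem_ball,
        dist_zero_right, not_lt]
      constructor
      · intro h
        by_cases h2 : ‖y‖ < r
        · exact Or.inl ⟨h, h2⟩
        · exact Or.inr (not_lt.1 h2)
      · rintro (⟨h, _⟩ | h)
        · exact h
        · linarith
    have hDρ := hNorm ρ hρ0
    have hDρS : IntegrableOn (muDen n s c ρ) S :=
      hDρ.1.mono_set (compl_subset_compl.2 (ball_subset_ball hρr.le))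
    have hptA : ∀ y ∈ A, |u y * muDen n s c ρ y| ≤ M * muDen n s c ρ y := by
      intro y hy
      have h1 : ρ ≤ ‖y‖ := mem_compl_ball_iff.1 hy.1
      have h2 : 0 ≤ muDen n s c ρ y := muDen_nonneg n hc.le hρ0.le h1
      rw [abs_mul, abs_of_nonneg h2]
      refine mul_le_mul_of_nonneg_right ?_ h2
      have := hM y (ball_subset_closedBall hy.2)
      rwa [Real.norm_eq_abs] at this
    have hIA : IntegrableOn (fun y => u y * muDen n s c ρ y) A := by
      apply Integrable.mono' ((hDρ.1.mono_set inter_subset_left).const_mul M) (hmeasu ρ _)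
      rw [ae_restrict_iff' hAmeas]
      exact ae_of_all _ fun y hy => by rw [Real.norm_eq_abs]; exact hptA y hy
    have hIS := hu_int ρ ⟨hρ0, hρr⟩
    rw [muInt, hcup, setIntegral_union hdisj hSmeas hIA hIS] at hmv
    have hmass : (∫ y in A, muDen n s c ρ y) + (∫ y in S, muDen n s c ρ y) = 1 := by
      rw [← setIntegral_union hdisj hSmeas (hDρ.1.mono_set inter_subset_left) hDρS, ← hcup]
      exact hDρ.2
    have hbnd : |∫ y in A, u y * muDen n s c ρ y| ≤ M * (1 - ∫ y in S, muDen n s c ρ y) := by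
      have h1 : |∫ y in A, u y * muDen n s c ρ y| ≤ ∫ y in A, |u y * muDen n s c ρ y| := by
        have := norm_integral_le_integral_norm (μ := volume.restrict A)
          (fun y => u y * muDen n s c ρ y)
        simp only [Real.norm_eq_abs] at this
        exact this
      have h2 : ∫ y in A, |u y * muDen n s c ρ y| ≤ ∫ y in A, M * muDen n s c ρ y :=
        setIntegral_mono_on hIA.abs ((hDρ.1.mono_set inter_subset_left).const_mul M)
          hAmeas hptA
      have h3 : ∫ y in A, M * muDen n s c ρ y = M * ∫ y in A, muDen n s c ρ y :=
        integral_const_mul _ _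
      have h4 : ∫ y in A, muDen n s c ρ y = 1 - ∫ y in S, muDen n s c ρ y := by
        linarith
      calc |∫ y in A, u y * muDen n s c ρ y| ≤ ∫ y in A, |u y * muDen n s c ρ y| := h1
        _ ≤ ∫ y in A, M * muDen n s c ρ y := h2
        _ = M * (1 - ∫ y in S, muDen n s c ρ y) := by rw [h3, h4]
    have heq : u 0 - ∫ y in S, u y * muDen n s c ρ y = ∫ y in A, u y * muDen n s c ρ y := by
      linarith
    rw [heq]
    exact hbnd
  -- pass to the limit
  have hlim1 : Tendsto (fun ρ => u 0 - ∫ y in S, u y * muDen n s c ρ y) (𝓝[<] r)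
      (𝓝 (u 0 - ∫ y in S, u y * muDen n s c r y)) := tendsto_const_nhds.sub hΦ
  have hlim2 : Tendsto (fun ρ => M * (1 - ∫ y in S, muDen n s c ρ y)) (𝓝[<] r) (𝓝 0) := by
    have h1 : Tendsto (fun ρ => (1:ℝ) - ∫ y in S, muDen n s c ρ y) (𝓝[<] r) (𝓝 (1 - 1)) :=
      tendsto_const_nhds.sub hΨ
    have h2 := h1.const_mul M
    simpa using h2
  have hzero : Tendsto (fun ρ => u 0 - ∫ y in S, u y * muDen n s c ρ y) (𝓝[<] r) (𝓝 0) := by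
    rw [tendsto_zero_iff_abs_tendsto_zero]
    exact squeeze_zero' (Eventually.of_forall fun ρ => abs_nonneg _) hkey hlim2
  have hfin := tendsto_nhds_unique hlim1 hzero
  have : u 0 = ∫ y in S, u y * muDen n s c r y := by linarith
  rw [muInt]
  exact this

end
end

section
/- Let n ≥ 1, s ∈ (0,1), c(n,s) > 0, p ∈ ℝⁿ, ν ∈ ℝⁿ a unit vector, r_int, r_ext > 0, and set x_int := p − r_int ν and x_ext := p + r_ext ν. Let x̄ ∈ ℝⁿ with |x̄ − x_int| < r_int and |x̄ − x_ext| > r_ext, and let P : (0, t₀) → ℝ (for some t₀ ∈ (0, r_ext)) satisfy, for every t ∈ (0, t₀), c(n,s)(r_int² − |x̄ − x_int|²)^s/((|p + tν − x_int|² − r_int²)^s |x̄ − p − tν|ⁿ) ≤ P(t) ≤ c(n,s)(|x̄ − x_ext|² − r_ext²)^s/((r_ext² − |p + tν − x_ext|²)^s |x̄ − p − tν|ⁿ). Then (c(n,s)/(2^s r_int^s |x̄ − p|ⁿ)) (2 r_int ν·(p − x̄) − |x̄ − p|²)^s ≤ liminf_{t→0⁺} P(t) t^s ≤ limsup_{t→0⁺}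 P(t) t^s ≤ (c(n,s)/(2^s r_ext^s |x̄ − p|ⁿ)) (2 r_ext ν·(p − x̄) + |x̄ − p|²)^s. -/
open MeasureTheory Metric Filter Set Topology

noncomputable section

/-- Lemma 2.4 of the paper: if `P(t)` is sandwiched between the
Poisson kernels of the interior tangent ball `B_{r_int}(x_int)` and of the complement
of the exterior tangent ball `B_{r_ext}(x_ext)` evaluated at `x̄` and `p + tν`, then
`liminf_{t→0⁺} P(t) t^s` and `limsup_{t→0⁺} P(t) t^s` satisfy the stated two-sided
bounds. -/
theorem poisson_tangent_ball_sandwich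
    (n : ℕ) (hn : 1 ≤ n) (s : ℝ) (hs : s ∈ Ioo (0 : ℝ) 1)
    (c : ℝ) (hc : 0 < c)
    (p ν : En n) (hν : ‖ν‖ = 1)
    (rint rext : ℝ) (hrint : 0 < rint) (hrext : 0 < rext)
    (xint xext : En n) (hxint : xint = p - rint • ν) (hxext : xext = p + rext • ν)
    (xbar : En n) (hxbar_int : ‖xbar - xint‖ < rint) (hxbar_ext : rext < ‖xbar - xext‖)
    (t₀ : ℝ) (ht₀ : t₀ ∈ Ioo (0 : ℝ) rext)
    (P : ℝ → ℝ)
    (hsandwich : ∀ t ∈ Ioo (0 : ℝ) t₀,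
      c * (rint ^ 2 - ‖xbar - xint‖ ^ 2) ^ s /
          ((‖p + t • ν - xint‖ ^ 2 - rint ^ 2) ^ s * ‖xbar - (p + t • ν)‖ ^ (n : ℝ))
        ≤ P t ∧
      P t ≤ c * (‖xbar - xext‖ ^ 2 - rext ^ 2) ^ s /
          ((rext ^ 2 - ‖p + t • ν - xext‖ ^ 2) ^ s * ‖xbar - (p + t • ν)‖ ^ (n : ℝ))) :
    c / (2 ^ s * rint ^ s * ‖xbar - p‖ ^ (n : ℝ)) *
        (2 * rint * (inner ℝ ν (p - xbar) : ℝ) - ‖xbar - p‖ ^ 2) ^ s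
      ≤ liminf (fun t : ℝ => P t * t ^ s) (𝓝[>] (0 : ℝ)) ∧
    liminf (fun t : ℝ => P t * t ^ s) (𝓝[>] (0 : ℝ))
      ≤ limsup (fun t : ℝ => P t * t ^ s) (𝓝[>] (0 : ℝ)) ∧
    limsup (fun t : ℝ => P t * t ^ s) (𝓝[>] (0 : ℝ))
      ≤ c / (2 ^ s * rext ^ s * ‖xbar - p‖ ^ (n : ℝ)) *
          (2 * rext * (inner ℝ ν (p - xbar) : ℝ) + ‖xbar - p‖ ^ 2) ^ s := by
  obtain ⟨hs0, hs1⟩ := hs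
  obtain ⟨ht0, ht0r⟩ := ht₀
  -- basic positivity
  have hxbp : 0 < ‖xbar - p‖ := by
    have h1 : ‖xbar - xext‖ ≤ ‖xbar - p‖ + rext := by
      rw [hxext]
      have : xbar - (p + rext • ν) = (xbar - p) + (-(rext • ν)) := by abel
      rw [this]
      calc ‖(xbar - p) + (-(rext • ν))‖ ≤ ‖xbar - p‖ + ‖-(rext • ν)‖ := norm_add_le _ _
        _ = ‖xbar - p‖ + rext := by
            rw [norm_neg, norm_smul, hν, Real.norm_eq_abs, abs_of_pos hrext, mul_one]
    linarith
  -- the two constants A, B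
  set A : ℝ := 2 * rint * (inner ℝ ν (p - xbar) : ℝ) - ‖xbar - p‖ ^ 2 with hAdef
  set B : ℝ := 2 * rext * (inner ℝ ν (p - xbar) : ℝ) + ‖xbar - p‖ ^ 2 with hBdef
  have hinner : (inner ℝ ν (p - xbar) : ℝ) = -(inner ℝ (xbar - p) ν : ℝ) := by
    rw [real_inner_comm]
    have : p - xbar = -(xbar - p) := by abel
    rw [this, inner_neg_left]
  have hAeq : rint ^ 2 - ‖xbar - xint‖ ^ 2 = A := by
    have h1 : xbar - xint = (xbar - p) + rint • ν := by rw [hxint]; abel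
    rw [h1, norm_add_sq_real, real_inner_smul_right, norm_smul, hν, Real.norm_eq_abs,
      abs_of_pos hrint, mul_one, hAdef, hinner]
    ring
  have hBeq : ‖xbar - xext‖ ^ 2 - rext ^ 2 = B := by
    have h1 : xbar - xext = (xbar - p) + (-rext) • ν := by
      rw [hxext, neg_smul]; abel
    rw [h1, norm_add_sq_real, real_inner_smul_right, norm_smul, hν, Real.norm_eq_abs,
      abs_of_neg (neg_neg_iff_pos.mpr hrext), mul_one, hBdef, hinner]
    ring
  have hApos : 0 < A := by
    rw [← hAeq]
    have h2 : ‖xbar - xint‖ ^ 2 < rint ^ 2 := by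
      apply sq_lt_sq' _ hxbar_int
      linarith [norm_nonneg (xbar - xint)]
    linarith
  have hBpos : 0 < B := by
    rw [← hBeq]
    have h2 : rext ^ 2 < ‖xbar - xext‖ ^ 2 := by
      apply sq_lt_sq' _ hxbar_ext
      linarith
    linarith
  -- the distance function and its rpow
  set D : ℝ → ℝ := fun t => ‖xbar - (p + t • ν)‖ ^ (n : ℝ) with hDdef
  have hφ : Continuous fun t : ℝ => ‖xbar - (p + t • ν)‖ :=
    (continuous_const.sub (continuous_const.add (continuous_id.smul continuous_const))).norm
  have hDcont : ContinuousAt D 0 :=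
    hφ.continuousAt.rpow_const (Or.inr (Nat.cast_nonneg n))
  have hD0 : D 0 = ‖xbar - p‖ ^ (n : ℝ) := by
    simp [hDdef]
  -- the two comparison functions
  set glo : ℝ → ℝ := fun t => c * A ^ s / ((t + 2 * rint) ^ s * D t) with hglo
  set ghi : ℝ → ℝ := fun t => c * B ^ s / ((2 * rext - t) ^ s * D t) with hghi
  -- limits
  set Llo : ℝ := c / (2 ^ s * rint ^ s * ‖xbar - p‖ ^ (n : ℝ)) * A ^ s with hLlo
  set Lhi : ℝ := c / (2 ^ s * rext ^ s * ‖xbar - p‖ ^ (n : ℝ)) * B ^ s with hLhi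
  have hXpos : 0 < ‖xbar - p‖ ^ (n : ℝ) := Real.rpow_pos_of_pos hxbp _
  have hTlo : Tendsto glo (𝓝[>] (0:ℝ)) (𝓝 Llo) := by
    have hden : ContinuousAt (fun t : ℝ => (t + 2 * rint) ^ s * D t) 0 :=
      (((continuous_id.add continuous_const).continuousAt).rpow_const (Or.inr hs0.le)).mul hDcont
    have hdenne : (fun t : ℝ => (t + 2 * rint) ^ s * D t) 0 ≠ 0 := by
      simp only [zero_add, hD0]
      positivity
    have : ContinuousAt glo 0 := ContinuousAt.div continuousAt_const hden hdenne
    have h0 : glo 0 = Llo := by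
      simp only [hglo, hD0, zero_add, hLlo]
      rw [Real.mul_rpow (by norm_num : (0:ℝ) ≤ 2) hrint.le]
      field_simp
    rw [← h0]
    exact this.continuousWithinAt.tendsto
  have hThi : Tendsto ghi (𝓝[>] (0:ℝ)) (𝓝 Lhi) := by
    have hden : ContinuousAt (fun t : ℝ => (2 * rext - t) ^ s * D t) 0 :=
      (((continuous_const.sub continuous_id).continuousAt).rpow_const (Or.inr hs0.le)).mul hDcont
    have hdenne : (fun t : ℝ => (2 * rext - t) ^ s * D t) 0 ≠ 0 := by
      simp only [sub_zero, hD0]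
      positivity
    have : ContinuousAt ghi 0 := ContinuousAt.div continuousAt_const hden hdenne
    have h0 : ghi 0 = Lhi := by
      simp only [hghi, hD0, sub_zero, hLhi]
      rw [Real.mul_rpow (by norm_num : (0:ℝ) ≤ 2) hrext.le]
      field_simp
    rw [← h0]
    exact this.continuousWithinAt.tendsto
  -- eventual sandwich
  have hmem : Ioo (0:ℝ) t₀ ∈ 𝓝[>] (0:ℝ) := Ioo_mem_nhdsGT_of_mem ⟨le_refl 0, ht0⟩
  have hev_lo : ∀ᶠ t in 𝓝[>] (0:ℝ), glo t ≤ P t * t ^ s := by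
    filter_upwards [hmem] with t ht
    obtain ⟨ht1, ht2⟩ := ht
    have hts : (0:ℝ) < t ^ s := Real.rpow_pos_of_pos ht1 s
    have hlow := (hsandwich t ⟨ht1, ht2⟩).1
    have hkey : c * (rint ^ 2 - ‖xbar - xint‖ ^ 2) ^ s /
        ((‖p + t • ν - xint‖ ^ 2 - rint ^ 2) ^ s * ‖xbar - (p + t • ν)‖ ^ (n : ℝ)) * t ^ s
        = glo t := by
      have h1 : p + t • ν - xint = (t + rint) • ν := by
        rw [hxint, add_smul]; abel
      have h2 : ‖p + t • ν - xint‖ = t + rint := by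
        rw [h1, norm_smul, hν, Real.norm_eq_abs, abs_of_pos (by linarith), mul_one]
      have h3 : ‖p + t • ν - xint‖ ^ 2 - rint ^ 2 = t * (t + 2 * rint) := by
        rw [h2]; ring
      rw [hAeq, h3, Real.mul_rpow ht1.le (by linarith), hglo]
      rw [mul_assoc, div_mul_eq_mul_div, mul_comm (c * A ^ s) (t ^ s),
        mul_div_mul_left _ _ (ne_of_gt hts)]
    calc glo t = _ * t ^ s := hkey.symm
      _ ≤ P t * t ^ s := by
        exact mul_le_mul_of_nonneg_right hlow hts.le
  have hev_hi : ∀ᶠ t in 𝓝[>] (0:ℝ), P t * t ^ s ≤ ghi t := by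
    filter_upwards [hmem] with t ht
    obtain ⟨ht1, ht2⟩ := ht
    have hts : (0:ℝ) < t ^ s := Real.rpow_pos_of_pos ht1 s
    have hhigh := (hsandwich t ⟨ht1, ht2⟩).2
    have hkey : c * (‖xbar - xext‖ ^ 2 - rext ^ 2) ^ s /
        ((rext ^ 2 - ‖p + t • ν - xext‖ ^ 2) ^ s * ‖xbar - (p + t • ν)‖ ^ (n : ℝ)) * t ^ s
        = ghi t := by
      have h1 : p + t • ν - xext = (t - rext) • ν := by
        rw [hxext, sub_smul]; abel
      have h2 : ‖p + t • ν - xext‖ = rext - t := by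
        rw [h1, norm_smul, hν, Real.norm_eq_abs, abs_of_neg (by linarith), mul_one]
        ring
      have h3 : rext ^ 2 - ‖p + t • ν - xext‖ ^ 2 = t * (2 * rext - t) := by
        rw [h2]; ring
      rw [hBeq, h3, Real.mul_rpow ht1.le (by linarith), hghi]
      rw [mul_assoc, div_mul_eq_mul_div, mul_comm (c * B ^ s) (t ^ s),
        mul_div_mul_left _ _ (ne_of_gt hts)]
    calc P t * t ^ s ≤ _ * t ^ s := mul_le_mul_of_nonneg_right hhigh hts.le
      _ = ghi t := hkey
  -- boundedness facts
  have hbd_ge : IsBoundedUnder (· ≥ ·) (𝓝[>] (0:ℝ)) (fun t => P t * t ^ s) := by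
    refine ⟨Llo - 1, ?_⟩
    rw [eventually_map]
    filter_upwards [hev_lo, hTlo.eventually (eventually_ge_nhds (by linarith : Llo - 1 < Llo))]
      with t h1 h2
    exact le_trans h2 h1
  have hbd_le : IsBoundedUnder (· ≤ ·) (𝓝[>] (0:ℝ)) (fun t => P t * t ^ s) := by
    refine ⟨Lhi + 1, ?_⟩
    rw [eventually_map]
    filter_upwards [hev_hi, hThi.eventually (eventually_le_nhds (by linarith : Lhi < Lhi + 1))]
      with t h1 h2
    exact le_trans h1 h2
  refine ⟨?_, liminf_le_limsup hbd_le hbd_ge, ?_⟩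
  · rw [← hTlo.liminf_eq]
    exact liminf_le_liminf hev_lo hTlo.isBoundedUnder_ge hbd_le.isCoboundedUnder_ge
  · rw [← hThi.limsup_eq]
    exact limsup_le_limsup hev_hi (hbd_ge.isCoboundedUnder_le) hThi.isBoundedUnder_le

end
end

section
/- Let n ≥ 1, s ∈ (0,1), c(n,s) > 0, p ∈ ℝⁿ, ν ∈ ℝⁿ a unit vector, r_int, r_ext > 0, and set x_int := p − r_int ν, x_ext := p + r_ext ν, x̄_η := η x_int + (1−η) p for η ∈ (0,1). Let x₀ ∈ ℝⁿ and let P : ({x₀} ∪ B_{r_int}(x_int)) × (0, t₀) → (0,∞) (for some t₀ ∈ (0, r_ext)) satisfy: (a) for every η ∈ (0,1) and every t ∈ (0, t₀), c(n,s)(r_int² − |x̄_η − x_int|²)^s/((|p + tν − x_int|² − r_int²)^s |x̄_η − p − tν|ⁿ) ≤ P(x̄_η, t) ≤ c(n,s)(|x̄_η − x_ext|² − r_ext²)^s/((r_ext² − |p + tν − x_ext|²)^s |x̄_η − p − tν|ⁿ); (b) for every η ∈ (0,1) the limit M_η := lim_{t→0⁺} P(x̄_η, t)/P(x₀, t) exists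 and lies in (0, ∞). Then the limit lim_{t→0⁺} P(x₀, t) t^s exists and is finite. -/
open MeasureTheory Metric Filter Set Topology

noncomputable section

private lemma aux_div_div (a b B : ℝ) (hb : b ≠ 0) (hB : B ≠ 0) :
    a / (b / B) = a / b * B := by
  field_simp

set_option maxHeartbeats 1000000 in
/-- conditional form of Theorem 1.9 of the paper: if `P(x, t)`
(representing `P_Ω(x, p + tν)`) is positive, satisfies the tangent-ball sandwich bounds
at the points `x̄_η = η x_int + (1−η) p`, and Martin kernel limits
`M_η = lim_{t→0⁺} P(x̄_η, t)/P(x₀, t)` exist in `(0, ∞)`, then the limit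
`lim_{t→0⁺} P(x₀, t) t^s` exists and is finite. -/
theorem poisson_boundary_limit_exists
    (n : ℕ) (hn : 1 ≤ n) (s : ℝ) (hs : s ∈ Ioo (0 : ℝ) 1)
    (c : ℝ) (hc : 0 < c)
    (p ν : En n) (hν : ‖ν‖ = 1)
    (rint rext : ℝ) (hrint : 0 < rint) (hrext : 0 < rext)
    (xint xext : En n) (hxint : xint = p - rint • ν) (hxext : xext = p + rext • ν)
    (x₀ : En n) (t₀ : ℝ) (ht₀ : t₀ ∈ Ioo (0 : ℝ) rext)
    (P : En n → ℝ → ℝ)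
    -- P maps into (0,∞) on its domain {x₀} ∪ B_{r_int}(x_int)
    (hPpos : ∀ x ∈ ({x₀} ∪ ball xint rint : Set (En n)), ∀ t ∈ Ioo (0 : ℝ) t₀, 0 < P x t)
    -- (a) the tangent-ball sandwich at x̄_η
    (hsandwich : ∀ η ∈ Ioo (0 : ℝ) 1, ∀ t ∈ Ioo (0 : ℝ) t₀,
      c * (rint ^ 2 - ‖(η • xint + (1 - η) • p) - xint‖ ^ 2) ^ s /
          ((‖p + t • ν - xint‖ ^ 2 - rint ^ 2) ^ s *
            ‖(η • xint + (1 - η) • p) - (p + t • ν)‖ ^ (n : ℝ))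
        ≤ P (η • xint + (1 - η) • p) t ∧
      P (η • xint + (1 - η) • p) t ≤
        c * (‖(η • xint + (1 - η) • p) - xext‖ ^ 2 - rext ^ 2) ^ s /
          ((rext ^ 2 - ‖p + t • ν - xext‖ ^ 2) ^ s *
            ‖(η • xint + (1 - η) • p) - (p + t • ν)‖ ^ (n : ℝ)))
    -- (b) existence of Martin kernel limits
    (hmartin : ∀ η ∈ Ioo (0 : ℝ) 1, ∃ M : ℝ, 0 < M ∧
      Tendsto (fun t : ℝ => P (η • xint + (1 - η) • p) t / P x₀ t)
        (𝓝[>] (0 : ℝ)) (𝓝 M)) :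
    ∃ L : ℝ, Tendsto (fun t : ℝ => P x₀ t * t ^ s) (𝓝[>] (0 : ℝ)) (𝓝 L) := by
  obtain ⟨hs0, hs1⟩ := hs
  obtain ⟨ht0, htr⟩ := ht₀
  set l : Filter ℝ := 𝓝[>] (0:ℝ) with hl
  set f : ℝ → ℝ := fun t => P x₀ t * t ^ s with hf
  -- explicit limit values
  set Lf : ℝ → ℝ := fun η =>
    c * (rint ^ 2 - ((1 - η) * rint) ^ 2) ^ s / ((2 * rint) ^ s * (η * rint) ^ (n:ℝ)) with hLf
  set Uf : ℝ → ℝ := fun η =>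
    c * ((η * rint + rext) ^ 2 - rext ^ 2) ^ s / ((2 * rext) ^ s * (η * rint) ^ (n:ℝ)) with hUf
  have hnorm : ∀ r : ℝ, ‖(r • ν : En n)‖ = |r| := fun r => by
    rw [norm_smul, hν, mul_one, Real.norm_eq_abs]
  have h1 : ∀ η : ℝ, (η • xint + (1-η) • p) - xint = ((1-η)*rint) • ν := fun η => by
    rw [hxint]; module
  have h2 : ∀ η t : ℝ, (η • xint + (1-η) • p) - (p + t • ν) = (-(η*rint + t)) • ν :=
    fun η t => by rw [hxint]; module
  have h3 : ∀ t : ℝ, p + t • ν - xint = (rint + t) • ν := fun t => by rw [hxint]; module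
  have h4 : ∀ t : ℝ, p + t • ν - xext = (t - rext) • ν := fun t => by rw [hxext]; module
  have h5 : ∀ η : ℝ, (η • xint + (1-η) • p) - xext = (-(η*rint + rext)) • ν := fun η => by
    rw [hxint, hxext]; module
  have hEv : Ioo (0:ℝ) t₀ ∈ l := Ioo_mem_nhdsGT_of_mem ⟨le_refl 0, ht0⟩
  -- positivity of the key algebraic quantities
  have hXpos : ∀ η ∈ Ioo (0:ℝ) 1, 0 < rint ^ 2 - ((1 - η) * rint) ^ 2 := by
    intro η hη
    have he : rint ^ 2 - ((1 - η) * rint) ^ 2 = rint ^ 2 * (η * (2 - η)) := by ring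
    rw [he]
    exact mul_pos (pow_pos hrint 2) (mul_pos hη.1 (by linarith [hη.2]))
  have hYpos : ∀ η ∈ Ioo (0:ℝ) 1, 0 < (η * rint + rext) ^ 2 - rext ^ 2 := by
    intro η hη
    have he : (η * rint + rext) ^ 2 - rext ^ 2 = (η * rint) * (η * rint + 2 * rext) := by ring
    rw [he]
    have h0 : 0 < η * rint := mul_pos hη.1 hrint
    exact mul_pos h0 (by linarith)
  have hmem : ∀ η ∈ Ioo (0:ℝ) 1,
      (η • xint + (1-η) • p) ∈ ({x₀} ∪ ball xint rint : Set (En n)) := by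
    intro η hη
    refine Set.mem_union_right _ ?_
    rw [mem_ball, dist_eq_norm, h1, hnorm,
      abs_of_pos (mul_pos (by linarith [hη.2]) hrint)]
    nlinarith [mul_pos hη.1 hrint]
  have hP0 : ∀ t ∈ Ioo (0:ℝ) t₀, 0 < P x₀ t :=
    fun t ht => hPpos x₀ (Set.mem_union_left _ (mem_singleton x₀)) t ht
  have hidt : Tendsto (fun t : ℝ => t) l (𝓝 0) := tendsto_id.mono_right nhdsWithin_le_nhds
  -- positivity of the limit values
  have hLpos : ∀ η ∈ Ioo (0:ℝ) 1, 0 < Lf η := by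
    intro η hη
    exact div_pos (mul_pos hc (Real.rpow_pos_of_pos (hXpos η hη) s))
      (mul_pos (Real.rpow_pos_of_pos (by positivity) s)
        (Real.rpow_pos_of_pos (mul_pos hη.1 hrint) (n:ℝ)))
  have hUpos : ∀ η ∈ Ioo (0:ℝ) 1, 0 < Uf η := by
    intro η hη
    exact div_pos (mul_pos hc (Real.rpow_pos_of_pos (hYpos η hη) s))
      (mul_pos (Real.rpow_pos_of_pos (by positivity) s)
        (Real.rpow_pos_of_pos (mul_pos hη.1 hrint) (n:ℝ)))
  -- main per-η bounds
  have main : ∀ η ∈ Ioo (0:ℝ) 1,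
      ∃ (lo hi : ℝ → ℝ) (M : ℝ), 0 < M ∧
        Tendsto lo l (𝓝 (Lf η / M)) ∧ Tendsto hi l (𝓝 (Uf η / M)) ∧
        (∀ᶠ t in l, lo t ≤ f t) ∧ (∀ᶠ t in l, f t ≤ hi t) := by
    intro η hη
    obtain ⟨M, hM, hMt⟩ := hmartin η hη
    have hηrint : 0 < η * rint := mul_pos hη.1 hrint
    refine ⟨fun t => (c * (rint ^ 2 - ((1-η)*rint) ^ 2) ^ s /
        ((2*rint+t) ^ s * (η*rint+t) ^ (n:ℝ))) / (P (η • xint + (1-η) • p) t / P x₀ t),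
      fun t => (c * ((η*rint+rext) ^ 2 - rext ^ 2) ^ s /
        ((2*rext-t) ^ s * (η*rint+t) ^ (n:ℝ))) / (P (η • xint + (1-η) • p) t / P x₀ t),
      M, hM, ?_, ?_, ?_, ?_⟩
    · have hc1 : Tendsto (fun t : ℝ => 2*rint+t) l (𝓝 (2*rint)) := by
        simpa using hidt.const_add (2*rint)
      have hc2 : Tendsto (fun t : ℝ => η*rint+t) l (𝓝 (η*rint)) := by
        simpa using hidt.const_add (η*rint)
      have hd : Tendsto (fun t : ℝ => (2*rint+t) ^ s * (η*rint+t) ^ (n:ℝ)) l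
          (𝓝 ((2*rint) ^ s * (η*rint) ^ (n:ℝ))) :=
        (hc1.rpow_const (Or.inr hs0.le)).mul (hc2.rpow_const (Or.inr (Nat.cast_nonneg n)))
      have hdne : ((2*rint) ^ s * (η*rint) ^ (n:ℝ)) ≠ 0 :=
        (mul_pos (Real.rpow_pos_of_pos (by positivity) s)
          (Real.rpow_pos_of_pos hηrint (n:ℝ))).ne'
      exact (tendsto_const_nhds.div hd hdne).div hMt hM.ne'
    · have hc1 : Tendsto (fun t : ℝ => 2*rext-t) l (𝓝 (2*rext)) := by
        simpa using hidt.const_sub (2*rext)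
      have hc2 : Tendsto (fun t : ℝ => η*rint+t) l (𝓝 (η*rint)) := by
        simpa using hidt.const_add (η*rint)
      have hd : Tendsto (fun t : ℝ => (2*rext-t) ^ s * (η*rint+t) ^ (n:ℝ)) l
          (𝓝 ((2*rext) ^ s * (η*rint) ^ (n:ℝ))) :=
        (hc1.rpow_const (Or.inr hs0.le)).mul (hc2.rpow_const (Or.inr (Nat.cast_nonneg n)))
      have hdne : ((2*rext) ^ s * (η*rint) ^ (n:ℝ)) ≠ 0 :=
        (mul_pos (Real.rpow_pos_of_pos (by positivity) s)
          (Real.rpow_pos_of_pos hηrint (n:ℝ))).ne'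
      exact (tendsto_const_nhds.div hd hdne).div hMt hM.ne'
    · -- lower bound
      filter_upwards [hEv] with t ht
      have hPb := (hsandwich η hη t ht).1
      rw [h1, h2 η t, h3, hnorm, hnorm, hnorm, abs_neg,
        abs_of_pos (mul_pos (by linarith [hη.2] : (0:ℝ) < 1-η) hrint),
        abs_of_pos (by linarith [ht.1] : (0:ℝ) < rint + t),
        abs_of_pos (by linarith [ht.1, hηrint] : (0:ℝ) < η*rint + t)] at hPb
      have hXe : (rint+t) ^ 2 - rint ^ 2 = t*(2*rint+t) := by ring
      rw [hXe, Real.mul_rpow ht.1.le (by linarith [ht.1] : (0:ℝ) ≤ 2*rint+t)] at hPb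
      have hts : 0 < t ^ s := Real.rpow_pos_of_pos ht.1 s
      have hE2 : 0 < (2*rint+t) ^ s := Real.rpow_pos_of_pos (by linarith [ht.1]) s
      have hD : 0 < (η*rint+t) ^ (n:ℝ) :=
        Real.rpow_pos_of_pos (by linarith [ht.1, hηrint]) (n:ℝ)
      have hPbpos : 0 < P (η • xint + (1-η) • p) t := hPpos _ (hmem η hη) t ht
      have h0 : 0 < P x₀ t := hP0 t ht
      have key2 : c * (rint ^ 2 - ((1-η)*rint) ^ 2) ^ s / ((2*rint+t) ^ s * (η*rint+t) ^ (n:ℝ))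
          ≤ P (η • xint + (1-η) • p) t * t ^ s := by
        rw [div_le_iff₀ (by positivity)] at hPb ⊢
        calc c * (rint ^ 2 - ((1-η)*rint) ^ 2) ^ s
            ≤ P (η • xint + (1-η) • p) t * (t ^ s * (2*rint+t) ^ s * (η*rint+t) ^ (n:ℝ)) := hPb
          _ = P (η • xint + (1-η) • p) t * t ^ s * ((2*rint+t) ^ s * (η*rint+t) ^ (n:ℝ)) := by
              ring
      calc c * (rint ^ 2 - ((1-η)*rint) ^ 2) ^ s / ((2*rint+t) ^ s * (η*rint+t) ^ (n:ℝ)) /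
              (P (η • xint + (1-η) • p) t / P x₀ t)
          ≤ (P (η • xint + (1-η) • p) t * t ^ s) / (P (η • xint + (1-η) • p) t / P x₀ t) := by
            gcongr
        _ = f t := by
            simp only [hf]
            field_simp
    · -- upper bound
      filter_upwards [hEv] with t ht
      have hPb := (hsandwich η hη t ht).2
      rw [h5 η, h2 η t, h4, hnorm, hnorm, hnorm, abs_neg, abs_neg,
        abs_of_pos (by linarith [hηrint] : (0:ℝ) < η*rint + rext),
        abs_of_pos (by linarith [ht.1, hηrint] : (0:ℝ) < η*rint + t),
        abs_of_neg (by linarith [ht.2, htr] : t - rext < 0)] at hPb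
      have hYe : rext ^ 2 - (-(t - rext)) ^ 2 = t*(2*rext-t) := by ring
      rw [hYe, Real.mul_rpow ht.1.le (by linarith [ht.2, htr] : (0:ℝ) ≤ 2*rext-t)] at hPb
      have hts : 0 < t ^ s := Real.rpow_pos_of_pos ht.1 s
      have hE2 : 0 < (2*rext-t) ^ s := Real.rpow_pos_of_pos (by linarith [ht.2, htr]) s
      have hD : 0 < (η*rint+t) ^ (n:ℝ) :=
        Real.rpow_pos_of_pos (by linarith [ht.1, hηrint]) (n:ℝ)
      have hPbpos : 0 < P (η • xint + (1-η) • p) t := hPpos _ (hmem η hη) t ht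
      have h0 : 0 < P x₀ t := hP0 t ht
      have key2 : P (η • xint + (1-η) • p) t * t ^ s
          ≤ c * ((η*rint+rext) ^ 2 - rext ^ 2) ^ s / ((2*rext-t) ^ s * (η*rint+t) ^ (n:ℝ)) := by
        rw [le_div_iff₀ (by positivity)] at hPb ⊢
        calc P (η • xint + (1-η) • p) t * t ^ s * ((2*rext-t) ^ s * (η*rint+t) ^ (n:ℝ))
            = P (η • xint + (1-η) • p) t * (t ^ s * (2*rext-t) ^ s * (η*rint+t) ^ (n:ℝ)) := by
              ring
          _ ≤ c * ((η*rint+rext) ^ 2 - rext ^ 2) ^ s := hPb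
      calc f t = (P (η • xint + (1-η) • p) t * t ^ s) /
              (P (η • xint + (1-η) • p) t / P x₀ t) := by
            simp only [hf]
            field_simp
        _ ≤ c * ((η*rint+rext) ^ 2 - rext ^ 2) ^ s / ((2*rext-t) ^ s * (η*rint+t) ^ (n:ℝ)) /
              (P (η • xint + (1-η) • p) t / P x₀ t) := by
            gcongr
  -- boundedness of f
  have h12 : (1/2 : ℝ) ∈ Ioo (0:ℝ) 1 := by norm_num
  obtain ⟨lo0, hi0, M0, hM0, hlo0, hhi0, hlof0, hfhi0⟩ := main _ h12
  have hfle : IsBoundedUnder (· ≤ ·) l f := (hhi0.isBoundedUnder_le).mono_le hfhi0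
  have hfge : IsBoundedUnder (· ≥ ·) l f := by
    refine ⟨0, eventually_map.2 ?_⟩
    filter_upwards [hEv] with t ht
    exact (mul_pos (hP0 t ht) (Real.rpow_pos_of_pos ht.1 s)).le
  -- limsup/liminf bounds
  have hbound : ∀ η ∈ Ioo (0:ℝ) 1, ∃ M : ℝ, 0 < M ∧
      limsup f l ≤ Uf η / M ∧ Lf η / M ≤ liminf f l := by
    intro η hη
    obtain ⟨lo, hi, M, hM, hlo, hhi, hlof, hfhi⟩ := main η hη
    refine ⟨M, hM, ?_, ?_⟩
    · calc limsup f l ≤ limsup hi l :=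
            limsup_le_limsup hfhi (hfge.isCoboundedUnder_le) (hhi.isBoundedUnder_le)
        _ = Uf η / M := hhi.limsup_eq
    · calc Lf η / M = liminf lo l := (hlo.liminf_eq).symm
        _ ≤ liminf f l := liminf_le_liminf hlof (hlo.isBoundedUnder_ge) (hfle.isCoboundedUnder_ge)
  have hBA : liminf f l ≤ limsup f l := liminf_le_limsup hfle hfge
  have hBpos : 0 < liminf f l := by
    obtain ⟨M, hM, _, hLB⟩ := hbound _ h12
    exact lt_of_lt_of_le (div_pos (hLpos _ h12) hM) hLB
  -- step: limsup ≤ (Uf η / Lf η) * liminf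
  have hstep : ∀ η ∈ Ioo (0:ℝ) 1, limsup f l ≤ (Uf η / Lf η) * liminf f l := by
    intro η hη
    obtain ⟨M, hM, hAU, hLB⟩ := hbound η hη
    have hL := hLpos η hη
    have hU := hUpos η hη
    have h1' : Lf η / liminf f l ≤ M := by
      rw [div_le_iff₀ hBpos]
      rw [div_le_iff₀ hM] at hLB
      nlinarith [hLB]
    calc limsup f l ≤ Uf η / M := hAU
      _ ≤ Uf η / (Lf η / liminf f l) := by
          gcongr <;> first
            | exact hU.le
            | exact div_pos hL hBpos
            | exact h1'
      _ = (Uf η / Lf η) * liminf f l := aux_div_div _ _ _ hL.ne' hBpos.ne'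
  -- ratio Uf/Lf tends to 1 as η → 0⁺
  have hQ : Tendsto (fun η => (Uf η / Lf η) * liminf f l) (𝓝[>] (0:ℝ)) (𝓝 (liminf f l)) := by
    have hQ1 : Tendsto (fun η => Uf η / Lf η) (𝓝[>] (0:ℝ)) (𝓝 1) := by
      have hidη : Tendsto (fun η : ℝ => η) (𝓝[>] (0:ℝ)) (𝓝 0) :=
        tendsto_id.mono_right nhdsWithin_le_nhds
      have hbase : Tendsto (fun η : ℝ => (η*rint+2*rext)/((2-η)*rext)) (𝓝[>] (0:ℝ)) (𝓝 1) := by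
        have hnum : Tendsto (fun η : ℝ => η*rint+2*rext) (𝓝[>] (0:ℝ)) (𝓝 (2*rext)) := by
          simpa using (hidη.mul_const rint).add_const (2*rext)
        have hden : Tendsto (fun η : ℝ => (2-η)*rext) (𝓝[>] (0:ℝ)) (𝓝 (2*rext)) := by
          simpa using (hidη.const_sub 2).mul_const rext
        have := hnum.div hden (by positivity)
        rw [div_self (by positivity : (2*rext : ℝ) ≠ 0)] at this
        exact this
      have hR : Tendsto (fun η : ℝ => ((η*rint+2*rext)/((2-η)*rext)) ^ s) (𝓝[>] (0:ℝ)) (𝓝 1) := by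
        have := hbase.rpow_const (Or.inr hs0.le)
        simpa [Real.one_rpow] using this
      refine hR.congr' ?_
      filter_upwards [Ioo_mem_nhdsGT_of_mem (⟨le_refl (0:ℝ), one_pos⟩ : (0:ℝ) ∈ Ico (0:ℝ) 1)]
        with η hη
      have hX := hXpos η hη
      have hb : 0 < (η*rint+2*rext)/((2-η)*rext) := by
        apply div_pos
        · have := mul_pos hη.1 hrint
          linarith
        · exact mul_pos (by linarith [hη.2]) hrext
      have hfac : (η * rint + rext) ^ 2 - rext ^ 2 =
          ((η*rint+2*rext)/((2-η)*rext)) *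
            ((rint ^ 2 - ((1 - η) * rint) ^ 2) * ((2*rext)/(2*rint))) := by
        have hd1 : ((2-η)*rext) ≠ 0 := (mul_pos (by linarith [hη.2]) hrext).ne'
        have hd2 : (2*rint : ℝ) ≠ 0 := by positivity
        have hd3 : (2-η : ℝ) ≠ 0 := (by linarith [hη.2] : (0:ℝ) < 2-η).ne'
        field_simp
        ring
      have hYs : ((η * rint + rext) ^ 2 - rext ^ 2) ^ s =
          ((η*rint+2*rext)/((2-η)*rext)) ^ s *
            ((rint ^ 2 - ((1 - η) * rint) ^ 2) ^ s * ((2*rext) ^ s / (2*rint) ^ s)) := by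
        have h2e : (0:ℝ) ≤ 2*rext := by linarith
        have h2i : (0:ℝ) ≤ 2*rint := by linarith
        rw [hfac, Real.mul_rpow hb.le (mul_nonneg hX.le (div_nonneg h2e h2i)),
          Real.mul_rpow hX.le (div_nonneg h2e h2i), Real.div_rpow h2e h2i]
      have hDpos : 0 < (η * rint) ^ (n:ℝ) :=
        Real.rpow_pos_of_pos (mul_pos hη.1 hrint) (n:ℝ)
      have hXs : 0 < (rint ^ 2 - ((1 - η) * rint) ^ 2) ^ s := Real.rpow_pos_of_pos hX s
      have hrs : 0 < ((2*rint : ℝ)) ^ s := Real.rpow_pos_of_pos (by positivity) s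
      have hres : 0 < ((2*rext : ℝ)) ^ s := Real.rpow_pos_of_pos (by positivity) s
      have gen : ∀ q Xs R1s R2s D : ℝ, 0 < Xs → 0 < R1s → 0 < R2s → 0 < D →
          q = c * (q * (Xs * (R2s/R1s))) / (R2s * D) / (c * Xs / (R1s * D)) := by
        intro q Xs R1s R2s D hh1 hh2 hh3 hh4
        field_simp
      simp only [hUf, hLf]
      rw [hYs]
      exact gen _ _ _ _ _ hXs hrs hres hDpos
    simpa using hQ1.mul_const (liminf f l)
  -- conclude limsup ≤ liminf
  have hAB : limsup f l ≤ liminf f l := by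
    refine ge_of_tendsto hQ ?_
    filter_upwards [Ioo_mem_nhdsGT_of_mem (⟨le_refl (0:ℝ), one_pos⟩ : (0:ℝ) ∈ Ico (0:ℝ) 1)]
      with η hη
    exact hstep η hη
  exact ⟨limsup f l, tendsto_of_liminf_eq_limsup (le_antisymm hBA hAB) rfl hfle hfge⟩

end
end
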